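/- Under the token setting and synchronization assumptions (A1), (A2), (A3), if the content-only logit gap satisfies Δ ≥ log(|S_¬*|/|S_*|) + log(1/ε) − (f_a(γ_φ) − f_a(ρ_φ) + log(1 − ξ_φ)), then the total attention mass on the relevant tokens satisfies Σ_{j ∈ S_*} a_{0j} ≥ 1 − ε. -/

import Mathlib

/-- under (A1), (A2), (A3), if the content-only logit gap satisfies
`Δ ≥ log(|S_¬*|/|S_*|) + log(1/ε) − (f_a(γ_φ) − f_a(ρ_φ) + log(1 − ξ_φ))`, then
the total attention mass on relevant tokens satisfies `Σ_{j ∈ S_*} a_{0j} ≥ 1 − ε`. -/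
theorem attention_concentration_relaxed_condition
    {ι : Type*} [DecidableEq ι] {d : ℕ}
    (Sstar Snot : Finset ι) (hSstar : Sstar.Nonempty) (hSnot : Snot.Nonempty)
    (hdisj : Disjoint Sstar Snot)
    (Shat : Finset ι) (hsub : Shat ⊆ Sstar) (hShat : Shat.Nonempty)
    (q0 : EuclideanSpace ℝ (Fin d)) (k : ι → EuclideanSpace ℝ (Fin d))
    (φ0 : ℝ) (φ : ι → ℝ)
    (fa : ℝ → ℝ) (hfa : Monotone fa)
    (γφ ρφ ξφ ε : ℝ) (hξ0 : 0 ≤ ξφ) (hξ1 : ξφ < 1) (hε : 0 < ε)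
    -- (A1) within-cluster tightness
    (hA1 : ∀ j ∈ Shat, γφ ≤ Real.cos (φ0 - φ j))
    -- (A2) inter-cluster separation
    (hA2 : ∀ r ∈ Snot, Real.cos (φ0 - φ r) ≤ ρφ)
    -- (A3) cluster–label consistency: |Ŝ_*| ≥ (1 − ξ_φ)|S_*|
    (hA3 : (1 - ξφ) * (Sstar.card : ℝ) ≤ (Shat.card : ℝ))
    -- phase-modulated logits and softmax attention weights
    (s : ι → ℝ)
    (hs : ∀ j, s j = (inner ℝ q0 (k j) : ℝ) + fa (Real.cos (φ0 - φ j)))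
    (a : ι → ℝ)
    (ha : ∀ j, a j = Real.exp (s j) / ∑ l ∈ Sstar ∪ Snot, Real.exp (s l))
    -- the relaxed condition on the content-only logit gap Δ
    (hgap : Sstar.inf' hSstar (fun j => (inner ℝ q0 (k j) : ℝ))
        - Snot.sup' hSnot (fun r => (inner ℝ q0 (k r) : ℝ))
      ≥ Real.log ((Snot.card : ℝ) / (Sstar.card : ℝ)) + Real.log (1 / ε)
        - (fa γφ - fa ρφ + Real.log (1 - ξφ))) :
    ∑ j ∈ Sstar, a j ≥ 1 - ε := by
  set m := Sstar.inf' hSstar (fun j => (inner ℝ q0 (k j) : ℝ)) with hm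
  set M := Snot.sup' hSnot (fun r => (inner ℝ q0 (k r) : ℝ)) with hM
  set A := ∑ j ∈ Sstar, Real.exp (s j) with hA
  set B := ∑ r ∈ Snot, Real.exp (s r) with hB
  have hnS : (0:ℝ) < (Sstar.card : ℝ) := by exact_mod_cast Finset.card_pos.mpr hSstar
  have hnN : (0:ℝ) < (Snot.card : ℝ) := by exact_mod_cast Finset.card_pos.mpr hSnot
  have hξ : (0:ℝ) < 1 - ξφ := by linarith
  -- upper bound on B
  have hBle : B ≤ (Snot.card : ℝ) * Real.exp (M + fa ρφ) := by
    rw [hB]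
    calc ∑ r ∈ Snot, Real.exp (s r) ≤ ∑ _r ∈ Snot, Real.exp (M + fa ρφ) := by
          apply Finset.sum_le_sum
          intro r hr
          rw [hs r]
          exact Real.exp_le_exp.mpr (add_le_add
            (Finset.le_sup' (fun r => (inner ℝ q0 (k r) : ℝ)) hr)
            (hfa (hA2 r hr)))
      _ = (Snot.card : ℝ) * Real.exp (M + fa ρφ) := by
          rw [Finset.sum_const, nsmul_eq_mul]
  -- lower bound on A
  have hAge : (1 - ξφ) * (Sstar.card : ℝ) * Real.exp (m + fa γφ) ≤ A := by
    have h1 : (Shat.card : ℝ) * Real.exp (m + fa γφ) ≤ ∑ j ∈ Shat, Real.exp (s j) := by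
      calc (Shat.card : ℝ) * Real.exp (m + fa γφ)
          = ∑ _j ∈ Shat, Real.exp (m + fa γφ) := by rw [Finset.sum_const, nsmul_eq_mul]
        _ ≤ ∑ j ∈ Shat, Real.exp (s j) := by
            apply Finset.sum_le_sum
            intro j hj
            rw [hs j]
            exact Real.exp_le_exp.mpr (add_le_add
              (Finset.inf'_le (fun j => (inner ℝ q0 (k j) : ℝ)) (hsub hj))
              (hfa (hA1 j hj)))
    have h2 : ∑ j ∈ Shat, Real.exp (s j) ≤ A := by
      apply Finset.sum_le_sum_of_subset_of_nonneg hsub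
      intro j _ _
      exact (Real.exp_pos _).le
    have h3 : (1 - ξφ) * (Sstar.card : ℝ) * Real.exp (m + fa γφ)
        ≤ (Shat.card : ℝ) * Real.exp (m + fa γφ) :=
      mul_le_mul_of_nonneg_right hA3 (Real.exp_pos _).le
    linarith
  -- key exponential inequality
  have hexp : (Snot.card : ℝ) * Real.exp (M + fa ρφ)
      ≤ ε * ((1 - ξφ) * (Sstar.card : ℝ) * Real.exp (m + fa γφ)) := by
    have hgap' : Real.log (Snot.card : ℝ) + (M + fa ρφ)
        ≤ Real.log ε + (Real.log (1 - ξφ) + (Real.log (Sstar.card : ℝ) + (m + fa γφ))) := by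
      rw [Real.log_div hnN.ne' hnS.ne', one_div, Real.log_inv] at hgap
      linarith
    calc (Snot.card : ℝ) * Real.exp (M + fa ρφ)
        = Real.exp (Real.log (Snot.card : ℝ) + (M + fa ρφ)) := by
          simp only [Real.exp_add, Real.exp_log hnN]
      _ ≤ Real.exp (Real.log ε + (Real.log (1 - ξφ) + (Real.log (Sstar.card : ℝ) + (m + fa γφ)))) :=
          Real.exp_le_exp.mpr hgap'
      _ = ε * ((1 - ξφ) * (Sstar.card : ℝ) * Real.exp (m + fa γφ)) := by
          simp only [Real.exp_add, Real.exp_log hε, Real.exp_log hξ, Real.exp_log hnS]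
          ring
  have hkey : B ≤ ε * A := by
    have := mul_le_mul_of_nonneg_left hAge hε.le
    linarith
  -- positivity of sums
  have hApos : 0 < A := Finset.sum_pos (fun j _ => Real.exp_pos _) hSstar
  have hBpos : 0 < B := Finset.sum_pos (fun r _ => Real.exp_pos _) hSnot
  have hZ : ∑ l ∈ Sstar ∪ Snot, Real.exp (s l) = A + B := Finset.sum_union hdisj
  have hZpos : (0:ℝ) < A + B := by linarith
  have hsum : ∑ j ∈ Sstar, a j = A / (A + B) := by
    rw [show ∑ j ∈ Sstar, a j = ∑ j ∈ Sstar,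
        Real.exp (s j) / ∑ l ∈ Sstar ∪ Snot, Real.exp (s l) from
        Finset.sum_congr rfl (fun j _ => ha j), hZ, ← Finset.sum_div]
  rw [hsum, ge_iff_le, le_div_iff₀ hZpos]
  nlinarith [mul_pos hε hBpos]
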